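/- Let S = Sym(V) be a polynomial ring over a field k, I ⊆ S an ideal, and let x_1,…,x_{n+2} ∈ V be linearly independent and y_1,…,y_{n+2} ∈ V arbitrary linear forms. Set x_{î} = x_1 ∧ ⋯ ∧ x_{i−1} ∧ x_{i+1} ∧ ⋯ ∧ x_{n+2} and ω = Σ_{i=1}^{n+2} (−1)^{i+1} x_{î} ⊗ y_i ∈ Λ^{n+1}V ⊗ V. Then the image of the Koszul differential ∂(ω) in Λ^n V ⊗ (S/I)_2 is zero if and only if x_i y_j − x_j y_i ∈ I for all 1 ≤ i < j ≤ n+2 (i.e., if and only if all 2×2 minors of the matrix with rows (x_1,…,x_{n+2}) and (y_1,…,y_{n+2}) lie in I). -/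

import Mathlib

/-!
STATEMENT 15: Let `S` be a polynomial ring over a field `k`, `V = S₁` its space of
linear forms, `I ⊆ S` an ideal, `x₁,…,x_{n+2} ∈ V` linearly independent and
`y₁,…,y_{n+2} ∈ V` arbitrary.  For
`ω = Σᵢ (−1)^{i+1} x_1 ∧ ⋯ ∧ x̂ᵢ ∧ ⋯ ∧ x_{n+2} ⊗ yᵢ ∈ Λ^{n+1}V ⊗ V`,
the Koszul differential `∂(ω)` (computed on decomposables by
`∂(v₁ ∧ ⋯ ∧ v_{n+1} ⊗ w) = Σⱼ (−1)^{j−1} v₁ ∧ ⋯ v̂ⱼ ⋯ ∧ v_{n+1} ⊗ vⱼ·w`) maps to zero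
in `Λ^n V ⊗ (S/I)₂` if and only if `xᵢ yⱼ − xⱼ yᵢ ∈ I` for all `i < j`.
-/

open MvPolynomial TensorProduct

set_option synthInstance.maxHeartbeats 1000000
set_option maxHeartbeats 1000000

noncomputable section

variable {k : Type*} [Field k] {σ : Type*}

/-- The space `V = S₁` of linear forms. -/
abbrev linForms (k : Type*) [Field k] (σ : Type*) : Submodule k (MvPolynomial σ k) :=
  homogeneousSubmodule σ k 1

/-- The Koszul differential of the decomposable element `v₁ ∧ ⋯ ∧ v_{m+1} ⊗ w` of
`Λ^{m+1}V ⊗ V`, viewed inside `ExteriorAlgebra k V ⊗ S`: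
`∂(v₁ ∧ ⋯ ∧ v_{m+1} ⊗ w) = Σⱼ (−1)^{j−1} v₁ ∧ ⋯ v̂ⱼ ⋯ ∧ v_{m+1} ⊗ vⱼ·w`. -/
def koszulOfDecomp (m : ℕ) (v : Fin (m + 1) → linForms k σ) (w : linForms k σ) :
    ExteriorAlgebra k (linForms k σ) ⊗[k] MvPolynomial σ k :=
  ∑ j : Fin (m + 1), ((-1 : ℤ) ^ (j : ℕ)) •
    ((ExteriorAlgebra.ιMulti k m (fun t => v (j.succAbove t)) :
        ExteriorAlgebra k (linForms k σ)) ⊗ₜ[k]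
      ((v j : MvPolynomial σ k) * (w : MvPolynomial σ k)))

/-- The Koszul differential of
`ω = Σᵢ (−1)^{i+1} x₁ ∧ ⋯ x̂ᵢ ⋯ ∧ x_{n+2} ⊗ yᵢ ∈ Λ^{n+1}V ⊗ V`. -/
def koszulOfOmega (n : ℕ) (x y : Fin (n + 2) → linForms k σ) :
    ExteriorAlgebra k (linForms k σ) ⊗[k] MvPolynomial σ k :=
  ∑ i : Fin (n + 2), ((-1 : ℤ) ^ (i : ℕ)) •
    koszulOfDecomp n (fun t => x (i.succAbove t)) (y i)

namespace KoszulAux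

lemma val_succAbove {m : ℕ} (i : Fin (m+1)) (j : Fin m) :
    ((i.succAbove j : Fin (m+1)) : ℕ) = if (j:ℕ) < (i:ℕ) then (j:ℕ) else (j:ℕ)+1 := by
  rw [Fin.succAbove]
  split_ifs with h1 h2 h2 <;> simp_all [Fin.lt_def]

def emb (n : ℕ) (a b : Fin (n+2)) : Fin n → Fin (n+2) :=
  fun t => b.succAbove ((⟨min a.1 n, by omega⟩ : Fin (n+1)).succAbove t)

lemma emb_val {n : ℕ} (a b : Fin (n+2)) (hab : a < b) (t : Fin n) :
    ((emb n a b t : Fin (n+2)) : ℕ)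
      = if (t:ℕ) < a.1 then t.1 else if t.1 + 1 < b.1 then t.1+1 else t.1+2 := by
  have hb := b.isLt; have ht := t.isLt; have hab' := Fin.lt_def.mp hab
  simp only [emb, val_succAbove]
  split_ifs <;> omega

lemma succAbove_pred_eq {n : ℕ} (a b : Fin (n+2)) (hab : a < b) (t : Fin n) :
    a.succAbove ((⟨b.1 - 1, by have := b.isLt; omega⟩ : Fin (n+1)).succAbove t)
      = emb n a b t := by
  have hb := b.isLt; have ht := t.isLt; have hab' := Fin.lt_def.mp hab
  apply Fin.ext
  rw [emb_val a b hab]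
  simp only [val_succAbove]
  split_ifs <;> omega

/-- The wedge `x_{g 1} ∧ ⋯ ∧ x_{g n}`. -/
def W (n : ℕ) (x : Fin (n+2) → linForms k σ) (g : Fin n → Fin (n+2)) :
    ExteriorAlgebra k (linForms k σ) :=
  ExteriorAlgebra.ιMulti k n (fun t => x (g t))

def dTerm (n : ℕ) (x y : Fin (n+2) → linForms k σ) (i l : Fin (n+2)) :
    ExteriorAlgebra k (linForms k σ) ⊗[k] MvPolynomial σ k :=
  if l < i then
    ((-1:ℤ)^(i.1+l.1)) • (W n x (emb n l i) ⊗ₜ[k]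
      ((x l : MvPolynomial σ k) * (y i : MvPolynomial σ k)))
  else if i < l then
    (-((-1:ℤ)^(i.1+l.1))) • (W n x (emb n i l) ⊗ₜ[k]
      ((x l : MvPolynomial σ k) * (y i : MvPolynomial σ k)))
  else 0

lemma dTerm_self (n : ℕ) (x y : Fin (n+2) → linForms k σ) (i : Fin (n+2)) :
    dTerm n x y i i = 0 := by
  simp [dTerm]

lemma dTerm_succAbove (n : ℕ) (x y : Fin (n+2) → linForms k σ)
    (i : Fin (n+2)) (j : Fin (n+1)) :
    dTerm n x y i (i.succAbove j) = ((-1:ℤ)^(i.1+j.1)) •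
      ((ExteriorAlgebra.ιMulti k n (fun t => x (i.succAbove (j.succAbove t))) :
          ExteriorAlgebra k (linForms k σ)) ⊗ₜ[k]
        ((x (i.succAbove j) : MvPolynomial σ k) * (y i : MvPolynomial σ k))) := by
  have hj := j.isLt
  rcases lt_or_ge j.castSucc i with h | h
  · have hl : i.succAbove j = j.castSucc := Fin.succAbove_of_castSucc_lt _ _ h
    rw [hl, dTerm, if_pos h]
    have hinner : (⟨min (j.castSucc).1 n, by omega⟩ : Fin (n+1)) = j := by
      apply Fin.ext; simp; omega
    have hW : W n x (emb n j.castSucc i) =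
        ExteriorAlgebra.ιMulti k n (fun t => x (i.succAbove (j.succAbove t))) := by
      unfold W emb
      rw [hinner]
    rw [hW]
    congr 1
  · have hl : i.succAbove j = j.succ := Fin.succAbove_of_le_castSucc _ _ h
    have hij : i < j.succ := lt_of_le_of_lt h ((Fin.castSucc_lt_succ (i := j)))
    rw [hl, dTerm, if_neg (by exact fun hc => absurd (hc.trans hij) (lt_irrefl _)), if_pos hij]
    have hinner : (⟨(j.succ).1 - 1, by have := (j.succ).isLt; omega⟩ : Fin (n+1)) = j := by
      apply Fin.ext; simp
    have hW : W n x (emb n i j.succ) =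
        ExteriorAlgebra.ιMulti k n (fun t => x (i.succAbove (j.succAbove t))) := by
      unfold W
      congr 1
      funext t
      rw [← succAbove_pred_eq i j.succ hij t, hinner]
    rw [hW]
    have hsgn : (-((-1:ℤ)^(i.1+(j.succ).1))) = (-1:ℤ)^(i.1+j.1) := by
      rw [Fin.val_succ, show i.1 + (j.1+1) = (i.1+j.1)+1 by omega, pow_succ]
      ring
    rw [hsgn]


lemma koszul_eq_sum_d (n : ℕ) (x y : Fin (n + 2) → linForms k σ) :
    koszulOfOmega n x y = ∑ i : Fin (n+2), ∑ l : Fin (n+2), dTerm n x y i l := by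
  unfold koszulOfOmega koszulOfDecomp
  refine Finset.sum_congr rfl fun i _ => ?_
  rw [Fin.sum_univ_succAbove (dTerm n x y i) i, dTerm_self n x y i, zero_add,
    Finset.smul_sum]
  refine Finset.sum_congr rfl fun j _ => ?_
  rw [dTerm_succAbove, smul_smul, ← pow_add]

lemma koszul_master (n : ℕ) (x y : Fin (n + 2) → linForms k σ) :
    koszulOfOmega n x y = ∑ q ∈ Finset.univ.filter
        (fun q : Fin (n+2) × Fin (n+2) => q.1 < q.2),
      ((-1:ℤ)^(q.1.1+q.2.1)) • (W n x (emb n q.1 q.2) ⊗ₜ[k]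
        ((x q.1 : MvPolynomial σ k) * (y q.2 : MvPolynomial σ k) -
         (x q.2 : MvPolynomial σ k) * (y q.1 : MvPolynomial σ k))) := by
  rw [koszul_eq_sum_d, ← Finset.sum_product']
  rw [show (Finset.univ ×ˢ Finset.univ : Finset (Fin (n+2) × Fin (n+2))) = Finset.univ from
    Finset.univ_product_univ]
  rw [← Finset.sum_filter_add_sum_filter_not Finset.univ
    (fun q : Fin (n+2) × Fin (n+2) => q.1 < q.2)
    (fun q : Fin (n+2) × Fin (n+2) => dTerm n x y q.1 q.2)]
  rw [← Finset.sum_filter_add_sum_filter_not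
    (Finset.univ.filter (fun q : Fin (n+2) × Fin (n+2) => ¬ q.1 < q.2))
    (fun q : Fin (n+2) × Fin (n+2) => q.2 < q.1)
    (fun q : Fin (n+2) × Fin (n+2) => dTerm n x y q.1 q.2)]
  have h3 : ∑ q ∈ (Finset.univ.filter
        (fun q : Fin (n+2) × Fin (n+2) => ¬ q.1 < q.2)).filter
        (fun q : Fin (n+2) × Fin (n+2) => ¬ q.2 < q.1),
      dTerm n x y q.1 q.2 = 0 := by
    refine Finset.sum_eq_zero fun q hq => ?_
    simp only [Finset.mem_filter, Finset.mem_univ, true_and] at hq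
    have : q.1 = q.2 := le_antisymm (not_lt.mp hq.2) (not_lt.mp hq.1)
    rw [← this, dTerm_self]
  rw [h3, add_zero]
  have h2 : ∑ q ∈ (Finset.univ.filter
        (fun q : Fin (n+2) × Fin (n+2) => ¬ q.1 < q.2)).filter
        (fun q : Fin (n+2) × Fin (n+2) => q.2 < q.1),
      dTerm n x y q.1 q.2
      = ∑ q ∈ Finset.univ.filter (fun q : Fin (n+2) × Fin (n+2) => q.1 < q.2),
      dTerm n x y q.2 q.1 := by
    refine Finset.sum_nbij' (fun q => (q.2, q.1)) (fun q => (q.2, q.1)) ?_ ?_ ?_ ?_ ?_ <;>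
      intro a ha <;>
      simp only [Finset.mem_filter, Finset.mem_univ, true_and] at * <;>
      first
        | exact ha.2
        | exact ⟨not_lt.mpr (le_of_lt ha), ha⟩
        | rfl
  rw [h2, ← Finset.sum_add_distrib]
  refine Finset.sum_congr rfl fun q hq => ?_
  simp only [Finset.mem_filter, Finset.mem_univ, true_and] at hq
  rw [dTerm, if_neg (asymm hq), if_pos hq, dTerm, if_pos hq,
    Nat.add_comm q.2.1 q.1.1, tmul_sub, smul_sub, neg_smul]
  abel


lemma emb_inj {n : ℕ} (a b : Fin (n+2)) (hab : a < b) {t u : Fin n}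
    (h : emb n a b t = emb n a b u) : t = u := by
  have h1 := congrArg Fin.val h
  rw [emb_val a b hab, emb_val a b hab] at h1
  have := t.isLt; have := u.isLt
  apply Fin.ext
  split_ifs at h1 <;> omega

lemma emb_ne_left {n : ℕ} (a b : Fin (n+2)) (hab : a < b) (t : Fin n) :
    emb n a b t ≠ a := by
  intro h
  have h1 := congrArg Fin.val h
  rw [emb_val a b hab] at h1
  have h2 := Fin.lt_def.mp hab
  have := t.isLt
  split_ifs at h1 <;> omega

lemma emb_ne_right {n : ℕ} (a b : Fin (n+2)) (hab : a < b) (t : Fin n) :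
    emb n a b t ≠ b := by
  intro h
  have h1 := congrArg Fin.val h
  rw [emb_val a b hab] at h1
  have h2 := Fin.lt_def.mp hab
  have := t.isLt
  split_ifs at h1 <;> omega

lemma emb_surj {n : ℕ} (a b : Fin (n+2)) (hab : a < b) (z : Fin (n+2))
    (hza : z ≠ a) (hzb : z ≠ b) : ∃ t : Fin n, emb n a b t = z := by
  have hb := b.isLt; have hz := z.isLt; have hab' := Fin.lt_def.mp hab
  have hza' : z.1 ≠ a.1 := fun h => hza (Fin.ext h)
  have hzb' : z.1 ≠ b.1 := fun h => hzb (Fin.ext h)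
  refine ⟨⟨if z.1 < a.1 then z.1 else if z.1 < b.1 then z.1 - 1 else z.1 - 2, by
    split_ifs <;> omega⟩, ?_⟩
  apply Fin.ext
  rw [emb_val a b hab]
  simp only
  split_ifs <;> omega

lemma exists_dual (n : ℕ) (x : Fin (n+2) → linForms k σ) (hx : LinearIndependent k x) :
    ∃ f : Fin (n+2) → (linForms k σ →ₗ[k] k),
      ∀ i j, f i (x j) = if i = j then 1 else 0 := by
  obtain ⟨q, hq⟩ := Submodule.exists_isCompl (Submodule.span k (Set.range x))
  refine ⟨fun i => (Finsupp.lapply i) ∘ₗ (hx.repr : _ →ₗ[k] _) ∘ₗ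
    (Submodule.span k (Set.range x)).linearProjOfIsCompl q hq, fun i j => ?_⟩
  have hmem : x j ∈ Submodule.span k (Set.range x) := Submodule.subset_span ⟨j, rfl⟩
  simp only [LinearMap.comp_apply]
  have h1 : (Submodule.span k (Set.range x)).linearProjOfIsCompl q hq (x j) = ⟨x j, hmem⟩ :=
    Submodule.linearProjOfIsCompl_apply_left hq ⟨x j, hmem⟩
  rw [h1, hx.repr_eq_single j ⟨x j, hmem⟩ rfl]
  rcases eq_or_ne i j with h | h
  · subst h; simp
  · simp [Finsupp.single_apply, h, Ne.symm h]

/-- The coordinate functional on the exterior algebra dual to the wedge `x_{emb a b}`. -/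
def pairDual (n : ℕ) (f : Fin (n+2) → (linForms k σ →ₗ[k] k)) (a b : Fin (n+2)) :
    ExteriorAlgebra k (linForms k σ) →ₗ[k] k :=
  ExteriorAlgebra.liftAlternating (Function.update
    (fun m => (0 : (linForms k σ) [⋀^Fin m]→ₗ[k] k)) n
    ((Matrix.detRowAlternating : (Fin n → k) [⋀^Fin n]→ₗ[k] k).compLinearMap
      (LinearMap.pi (fun t => f (emb n a b t)))))

lemma pairDual_W (n : ℕ) (f : Fin (n+2) → (linForms k σ →ₗ[k] k)) (a b : Fin (n+2))
    (x : Fin (n+2) → linForms k σ) (g : Fin n → Fin (n+2)) :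
    pairDual n f a b (W n x g)
      = Matrix.det (Matrix.of fun u t => f (emb n a b t) (x (g u))) := by
  unfold pairDual W
  rw [ExteriorAlgebra.liftAlternating_apply_ιMulti, Function.update_self]
  rfl

lemma pairDual_self (n : ℕ) (f : Fin (n+2) → (linForms k σ →ₗ[k] k))
    (x : Fin (n+2) → linForms k σ)
    (hf : ∀ i j, f i (x j) = if i = j then 1 else 0)
    (a b : Fin (n+2)) (hab : a < b) :
    pairDual n f a b (W n x (emb n a b)) = 1 := by
  rw [pairDual_W]
  have h : (Matrix.of fun u t => (f (emb n a b t)) (x (emb n a b u))) = 1 := by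
    ext u t
    rw [Matrix.of_apply, hf, Matrix.one_apply]
    rcases eq_or_ne u t with h | h
    · subst h; rw [if_pos rfl, if_pos rfl]
    · rw [if_neg (fun hc => h (emb_inj a b hab hc).symm), if_neg h]
  rw [h, Matrix.det_one]

lemma pairDual_ne (n : ℕ) (f : Fin (n+2) → (linForms k σ →ₗ[k] k))
    (x : Fin (n+2) → linForms k σ)
    (hf : ∀ i j, f i (x j) = if i = j then 1 else 0)
    (a b a' b' : Fin (n+2)) (hab : a < b) (hab' : a' < b')
    (hne : (a, b) ≠ (a', b')) :
    pairDual n f a b (W n x (emb n a' b')) = 0 := by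
  obtain ⟨z, hz, hz1, hz2⟩ : ∃ z, (z = a ∨ z = b) ∧ z ≠ a' ∧ z ≠ b' := by
    by_cases h1 : a ≠ a' ∧ a ≠ b'
    · exact ⟨a, Or.inl rfl, h1.1, h1.2⟩
    · by_cases h2 : b ≠ a' ∧ b ≠ b'
      · exact ⟨b, Or.inr rfl, h2.1, h2.2⟩
      · exfalso
        apply hne
        push_neg at h1 h2
        have e1 : a.1 = a'.1 ∨ a.1 = b'.1 := by
          rcases eq_or_ne a a' with h | h
          · exact Or.inl (congrArg Fin.val h)
          · exact Or.inr (congrArg Fin.val (h1 h))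
        have e2 : b.1 = a'.1 ∨ b.1 = b'.1 := by
          rcases eq_or_ne b a' with h | h
          · exact Or.inl (congrArg Fin.val h)
          · exact Or.inr (congrArg Fin.val (h2 h))
        have v1 := Fin.lt_def.mp hab
        have v2 := Fin.lt_def.mp hab'
        have : a.1 = a'.1 ∧ b.1 = b'.1 := by omega
        exact Prod.ext (Fin.ext this.1) (Fin.ext this.2)
  obtain ⟨u, hu⟩ := emb_surj a' b' hab' z hz1 hz2
  rw [pairDual_W]
  apply Matrix.det_eq_zero_of_row_eq_zero u
  intro t
  rw [Matrix.of_apply, hu, hf]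
  rcases hz with h | h <;> rw [h]
  · exact if_neg (emb_ne_left a b hab t)
  · exact if_neg (emb_ne_right a b hab t)

end KoszulAux

theorem koszul_cycle_iff_minors (n : ℕ) (I : Ideal (MvPolynomial σ k))
    (x y : Fin (n + 2) → linForms k σ) (hx : LinearIndependent k x) :
    (TensorProduct.map (LinearMap.id)
        (Submodule.mkQ (Submodule.restrictScalars k (I : Submodule (MvPolynomial σ k)
          (MvPolynomial σ k))))) (koszulOfOmega n x y) = 0 ↔
      ∀ i j : Fin (n + 2), i < j →
        (x i : MvPolynomial σ k) * (y j : MvPolynomial σ k) -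
          (x j : MvPolynomial σ k) * (y i : MvPolynomial σ k) ∈ I := by
  classical
  set J := Submodule.restrictScalars k
      (I : Submodule (MvPolynomial σ k) (MvPolynomial σ k)) with hJ
  rw [KoszulAux.koszul_master n x y, map_sum]
  simp only [map_zsmul, TensorProduct.map_tmul, LinearMap.id_apply]
  constructor
  · intro h i j hij
    obtain ⟨f, hf⟩ := KoszulAux.exists_dual n x hx
    set φ := KoszulAux.pairDual n f i j with hφ
    set ψ := (TensorProduct.lid k (MvPolynomial σ k ⧸ J)).toLinearMap ∘ₗ
      LinearMap.rTensor (MvPolynomial σ k ⧸ J) φ with hψdef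
    have hψ : ∀ (w : ExteriorAlgebra k (linForms k σ)) (c : MvPolynomial σ k ⧸ J),
        ψ (w ⊗ₜ[k] c) = φ w • c := by
      intro w c
      simp [hψdef, TensorProduct.lid_tmul]
    have h0 := congrArg ψ h
    rw [map_zero, map_sum] at h0
    have hmem : (i, j) ∈ Finset.univ.filter
        (fun q : Fin (n+2) × Fin (n+2) => q.1 < q.2) :=
      Finset.mem_filter.mpr ⟨Finset.mem_univ _, hij⟩
    have hrest : ∀ q ∈ Finset.univ.filter
        (fun q : Fin (n+2) × Fin (n+2) => q.1 < q.2), q ≠ (i, j) →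
        ψ (((-1:ℤ)^(q.1.1+q.2.1)) • (KoszulAux.W n x (KoszulAux.emb n q.1 q.2) ⊗ₜ[k]
          (Submodule.mkQ J ((x q.1 : MvPolynomial σ k) * (y q.2 : MvPolynomial σ k) -
            (x q.2 : MvPolynomial σ k) * (y q.1 : MvPolynomial σ k))))) = 0 := by
      intro q hq hne
      have hq' : q.1 < q.2 := (Finset.mem_filter.mp hq).2
      have hne' : (i, j) ≠ (q.1, q.2) := fun hc =>
        hne (Prod.ext (congrArg Prod.fst hc).symm (congrArg Prod.snd hc).symm)
      rw [map_zsmul, hψ, hφ, KoszulAux.pairDual_ne n f x hf i j q.1 q.2 hij hq' hne',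
        zero_smul, smul_zero]
    rw [Finset.sum_eq_single_of_mem (i, j) hmem hrest] at h0
    rw [map_zsmul, hψ, hφ, KoszulAux.pairDual_self n f x hf i j hij, one_smul] at h0
    have h2 : Submodule.mkQ J ((x i : MvPolynomial σ k) * (y j : MvPolynomial σ k) -
        (x j : MvPolynomial σ k) * (y i : MvPolynomial σ k)) = 0 := by
      rcases neg_one_pow_eq_or ℤ (i.1 + j.1) with hp | hp <;> rw [hp] at h0
      · simpa using h0
      · rw [neg_one_zsmul, neg_eq_zero] at h0; exact h0
    rwa [Submodule.mkQ_apply, Submodule.Quotient.mk_eq_zero,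
      Submodule.restrictScalars_mem] at h2
  · intro h
    apply Finset.sum_eq_zero
    intro q hq
    have hq' : q.1 < q.2 := (Finset.mem_filter.mp hq).2
    have hz : Submodule.mkQ J ((x q.1 : MvPolynomial σ k) * (y q.2 : MvPolynomial σ k) -
        (x q.2 : MvPolynomial σ k) * (y q.1 : MvPolynomial σ k)) = 0 := by
      rw [Submodule.mkQ_apply, Submodule.Quotient.mk_eq_zero,
        Submodule.restrictScalars_mem]
      exact h q.1 q.2 hq'
    rw [hz, tmul_zero, smul_zero]

end
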